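/- Penalized Q-values are shifted below unpenalized Q-values at advising actions: for every β ≥ 0, every h ∈ {1,…,H}, every s ∈ S and every a ∈ Ā with a ≠ defer, one has Q*_{h,β}(s,a) ≤ Q*_h(s,a) − β. -/
import Mathlib


open Finset

noncomputable section

variable {S A B : Type*}

/-- Human action distribution `ℙ_h(a|s,a^M)` given machine advice (`none` = defer). -/
def Pact [DecidableEq A] (piH : ℕ → S → A → ℝ) (θ : S → A → ℝ)
    (h : ℕ) (s : S) (aM : Option A) (a : A) : ℝ :=
  match aM with
  | Option.none => piH h s a
  | Option.some b => if a = b then θ s b else (1 - θ s b) * piH h s a / (1 - piH h s b)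

/-- Machine transition kernel `p^M_h(s'|s,a^M)`. -/
def pM [Fintype A] [DecidableEq A] (p : ℕ → S → A → S → ℝ) (piH : ℕ → S → A → ℝ)
    (θ : S → A → ℝ) (h : ℕ) (s : S) (aM : Option A) (s' : S) : ℝ :=
  ∑ a : A, p h s a s' * Pact piH θ h s aM a

/-- Machine reward `r^M_h(s,a^M)`. -/
def rM [Fintype A] [DecidableEq A] (r : ℕ → S → A → ℝ) (piH : ℕ → S → A → ℝ)
    (θ : S → A → ℝ) (h : ℕ) (s : S) (aM : Option A) : ℝ :=
  ∑ a : A, r h s a * Pact piH θ h s aM a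

/-- Indicator of advising (`a^M ≠ defer`). -/
def indAdv : Option A → ℝ := fun aM => match aM with
  | Option.none => 0
  | Option.some _ => 1

/-- The β-penalized machine reward `r^M_{h,β}(s,a) = r^M_h(s,a) − β·1{a ≠ defer}`. -/
def rMpen [Fintype A] [DecidableEq A] (r : ℕ → S → A → ℝ) (piH : ℕ → S → A → ℝ)
    (θ : S → A → ℝ) (β : ℝ) (h : ℕ) (s : S) (aM : Option A) : ℝ :=
  rM r piH θ h s aM - β * indAdv aM

/-- The always-defer policy. -/
def deferPol : ℕ → S → Option A := fun _ _ => Option.none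

/-- Value with `k` remaining steps starting at stage `h`. -/
def Vfuel [Fintype S] (P : ℕ → S → B → S → ℝ) (R : ℕ → S → B → ℝ)
    (pol : ℕ → S → B) : ℕ → ℕ → S → ℝ
  | _, 0, _ => 0
  | h, k + 1, s =>
      R h s (pol h s) + ∑ s' : S, P h s (pol h s) s' * Vfuel P R pol (h + 1) k s'

/-- Value function `V^π_h(s)` of a deterministic Markov policy with horizon `H`:
`V^π_{H+1} = 0` and `V^π_h(s) = R_h(s,π_h(s)) + Σ_{s'} P_h(s'|s,π_h(s)) V^π_{h+1}(s')`. -/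
def Vval [Fintype S] (H : ℕ) (P : ℕ → S → B → S → ℝ) (R : ℕ → S → B → ℝ)
    (pol : ℕ → S → B) (h : ℕ) (s : S) : ℝ :=
  Vfuel P R pol h (H + 1 - h) s

/-- Optimal value function: supremum over deterministic Markov policies. -/
def Vstar [Fintype S] (H : ℕ) (P : ℕ → S → B → S → ℝ) (R : ℕ → S → B → ℝ)
    (h : ℕ) (s : S) : ℝ :=
  ⨆ pol : ℕ → S → B, Vval H P R pol h s

/-- Optimal Q-function `Q*_h(s,b) = R_h(s,b) + Σ_{s'} P_h(s'|s,b) V*_{h+1}(s')`. -/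
def Qstar [Fintype S] (H : ℕ) (P : ℕ → S → B → S → ℝ) (R : ℕ → S → B → ℝ)
    (h : ℕ) (s : S) (b : B) : ℝ :=
  R h s b + ∑ s' : S, P h s b s' * Vstar H P R (h + 1) s'

/-- Q-function of a policy with `k` remaining steps. -/
def Qfuel [Fintype S] (P : ℕ → S → B → S → ℝ) (R : ℕ → S → B → ℝ)
    (pol : ℕ → S → B) : ℕ → ℕ → S → B → ℝ
  | _, 0, _, _ => 0
  | h, k + 1, s, b =>
      R h s b + ∑ s' : S, P h s b s' * Qfuel P R pol (h + 1) k s' (pol (h + 1) s')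

/-- Q-function `Q^π_h(s,b)` of a policy with horizon `H` (`Q^π_{H+1} = 0`). -/
def Qval [Fintype S] (H : ℕ) (P : ℕ → S → B → S → ℝ) (R : ℕ → S → B → ℝ)
    (pol : ℕ → S → B) (h : ℕ) (s : S) (b : B) : ℝ :=
  Qfuel P R pol h (H + 1 - h) s b

end

section auxlem
variable {S' B' : Type*} [Fintype S']

lemma Vfuel_le_fuel (H : ℕ) (P : ℕ → S' → B' → S' → ℝ) (R : ℕ → S' → B' → ℝ)
    (hP : ∀ h, 1 ≤ h → h ≤ H → ∀ (s : S') (b : B'),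
      (∀ s', 0 ≤ P h s b s') ∧ ∑ s' : S', P h s b s' = 1)
    (hR : ∀ h, 1 ≤ h → h ≤ H → ∀ (s : S') (b : B'), R h s b ≤ 1)
    (pol : ℕ → S' → B') :
    ∀ k h, 1 ≤ h → h + k ≤ H + 1 → ∀ s, Vfuel P R pol h k s ≤ (k : ℝ) := by
  intro k
  induction k with
  | zero => intro h _ _ s; simp [Vfuel]
  | succ k ih =>
      intro h h1 hk s
      have hhH : h ≤ H := by omega
      have hPs := hP h h1 hhH s (pol h s)
      have heq : Vfuel P R pol h (k+1) s
          = R h s (pol h s) + ∑ s' : S', P h s (pol h s) s' * Vfuel P R pol (h+1) k s' := rfl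
      rw [heq]
      have hsum : ∑ s' : S', P h s (pol h s) s' * Vfuel P R pol (h+1) k s'
          ≤ ∑ s' : S', P h s (pol h s) s' * (k : ℝ) := by
        refine Finset.sum_le_sum fun s' _ => ?_
        exact mul_le_mul_of_nonneg_left (ih (h+1) (by omega) (by omega) s') (hPs.1 s')
      have h2 : ∑ s' : S', P h s (pol h s) s' * (k : ℝ) = (k : ℝ) := by
        rw [← Finset.sum_mul, hPs.2, one_mul]
      push_cast
      linarith [hR h h1 hhH s (pol h s)]

lemma Vfuel_mono_reward (H : ℕ) (P : ℕ → S' → B' → S' → ℝ)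
    (R1 R2 : ℕ → S' → B' → ℝ)
    (hP : ∀ h, 1 ≤ h → h ≤ H → ∀ (s : S') (b : B'), ∀ s', 0 ≤ P h s b s')
    (hR : ∀ h, 1 ≤ h → h ≤ H → ∀ (s : S') (b : B'), R1 h s b ≤ R2 h s b)
    (pol : ℕ → S' → B') :
    ∀ k h, 1 ≤ h → h + k ≤ H + 1 → ∀ s,
      Vfuel P R1 pol h k s ≤ Vfuel P R2 pol h k s := by
  intro k
  induction k with
  | zero => intro h _ _ s; simp [Vfuel]
  | succ k ih =>
      intro h h1 hk s
      have hhH : h ≤ H := by omega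
      show R1 h s (pol h s) + ∑ s' : S', P h s (pol h s) s' * Vfuel P R1 pol (h+1) k s'
        ≤ R2 h s (pol h s) + ∑ s' : S', P h s (pol h s) s' * Vfuel P R2 pol (h+1) k s'
      have hsum : ∑ s' : S', P h s (pol h s) s' * Vfuel P R1 pol (h+1) k s'
          ≤ ∑ s' : S', P h s (pol h s) s' * Vfuel P R2 pol (h+1) k s' := by
        refine Finset.sum_le_sum fun s' _ => ?_
        exact mul_le_mul_of_nonneg_left (ih (h+1) (by omega) (by omega) s')
          (hP h h1 hhH s (pol h s) s')
      linarith [hR h h1 hhH s (pol h s)]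

end auxlem

section pactlem
variable {S A : Type*} [Fintype A] [DecidableEq A]

lemma Pact_nonneg (piH : ℕ → S → A → ℝ) (θ : S → A → ℝ) (h : ℕ) (s : S)
    (hpi : ∀ a : A, 0 ≤ piH h s a) (hlt : ∀ a : A, piH h s a < 1)
    (hθ : ∀ a : A, 0 ≤ θ s a ∧ θ s a ≤ 1) (aM : Option A) (a : A) :
    0 ≤ Pact piH θ h s aM a := by
  cases aM with
  | none => exact hpi a
  | some b =>
      simp only [Pact]
      by_cases hab : a = b
      · simp [hab, (hθ b).1]
      · simp only [hab, if_false]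
        have h1 : (0:ℝ) < 1 - piH h s b := by linarith [hlt b]
        exact div_nonneg (mul_nonneg (by linarith [(hθ b).2]) (hpi a)) h1.le

lemma Pact_sum (piH : ℕ → S → A → ℝ) (θ : S → A → ℝ) (h : ℕ) (s : S)
    (hsum : ∑ a : A, piH h s a = 1) (hlt : ∀ a : A, piH h s a < 1)
    (aM : Option A) :
    ∑ a : A, Pact piH θ h s aM a = 1 := by
  cases aM with
  | none => simpa [Pact] using hsum
  | some b =>
      have hb : (1:ℝ) - piH h s b ≠ 0 := by have := hlt b; linarith
      rw [← Finset.add_sum_erase Finset.univ _ (Finset.mem_univ b)]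
      have h1 : Pact piH θ h s (some b) b = θ s b := by simp [Pact]
      have h2 : ∑ a ∈ Finset.univ.erase b, Pact piH θ h s (some b) a
          = (1 - θ s b) * (∑ a ∈ Finset.univ.erase b, piH h s a) / (1 - piH h s b) := by
        rw [Finset.mul_sum, Finset.sum_div]
        refine Finset.sum_congr rfl fun a ha => ?_
        have hab : a ≠ b := Finset.ne_of_mem_erase ha
        simp [Pact, hab]
      have h3 : ∑ a ∈ Finset.univ.erase b, piH h s a = 1 - piH h s b := by
        rw [Finset.sum_erase_eq_sub (Finset.mem_univ b), hsum]
      rw [h1, h2, h3, mul_div_assoc, div_self hb, mul_one]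
      ring

end pactlem

/-- penalized Q-values are shifted below unpenalized Q-values at
advising actions. -/
theorem penalized_Q_shift
    {S A : Type*} [Fintype S] [Fintype A] [Nonempty S] [Nonempty A] [DecidableEq A]
    (H : ℕ) (hH : 1 ≤ H)
    (p : ℕ → S → A → S → ℝ) (r : ℕ → S → A → ℝ) (piH : ℕ → S → A → ℝ)
    (hp : ∀ h, 1 ≤ h → h ≤ H → ∀ (s : S) (a : A),
      (∀ s' : S, 0 ≤ p h s a s') ∧ ∑ s' : S, p h s a s' = 1)
    (hr : ∀ h, 1 ≤ h → h ≤ H → ∀ (s : S) (a : A), 0 ≤ r h s a ∧ r h s a ≤ 1)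
    (hpiH : ∀ h, 1 ≤ h → h ≤ H → ∀ s : S,
      (∀ a : A, 0 ≤ piH h s a) ∧ ∑ a : A, piH h s a = 1)
    (hpiHlt : ∀ h, 1 ≤ h → h ≤ H → ∀ (s : S) (a : A), piH h s a < 1)
    (θ : S → A → ℝ) (hθ : ∀ (s : S) (a : A), 0 ≤ θ s a ∧ θ s a ≤ 1)
    (β : ℝ) (hβ : 0 ≤ β) :
    ∀ h, 1 ≤ h → h ≤ H → ∀ (s : S) (a : Option A), a ≠ Option.none →
      Qstar H (pM p piH θ) (rMpen r piH θ β) h s a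
        ≤ Qstar H (pM p piH θ) (rM r piH θ) h s a - β := by
  intro h h1 hH2 s a ha
  obtain ⟨b, rfl⟩ : ∃ b, a = some b := by cases a with
    | none => exact absurd rfl ha
    | some b => exact ⟨b, rfl⟩
  -- basic facts
  have hPactnn : ∀ t, 1 ≤ t → t ≤ H → ∀ (s : S) (aM : Option A) (a : A),
      0 ≤ Pact piH θ t s aM a := fun t ht1 ht2 s aM a =>
    Pact_nonneg piH θ t s (hpiH t ht1 ht2 s).1 (hpiHlt t ht1 ht2 s) (fun a => hθ s a) aM a
  have hPactsum : ∀ t, 1 ≤ t → t ≤ H → ∀ (s : S) (aM : Option A),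
      ∑ a : A, Pact piH θ t s aM a = 1 := fun t ht1 ht2 s aM =>
    Pact_sum piH θ t s (hpiH t ht1 ht2 s).2 (hpiHlt t ht1 ht2 s) aM
  have hpMnn : ∀ t, 1 ≤ t → t ≤ H → ∀ (s : S) (aM : Option A) (s' : S),
      0 ≤ pM p piH θ t s aM s' := by
    intro t ht1 ht2 s aM s'
    refine Finset.sum_nonneg fun a _ => mul_nonneg ((hp t ht1 ht2 s a).1 s') ?_
    exact hPactnn t ht1 ht2 s aM a
  have hpMstoch : ∀ t, 1 ≤ t → t ≤ H → ∀ (s : S) (aM : Option A),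
      (∀ s', 0 ≤ pM p piH θ t s aM s') ∧ ∑ s' : S, pM p piH θ t s aM s' = 1 := by
    intro t ht1 ht2 s aM
    refine ⟨hpMnn t ht1 ht2 s aM, ?_⟩
    unfold pM
    rw [Finset.sum_comm]
    have : ∀ a : A, ∑ s' : S, p t s a s' * Pact piH θ t s aM a
        = Pact piH θ t s aM a := by
      intro a
      rw [← Finset.sum_mul, (hp t ht1 ht2 s a).2, one_mul]
    simp_rw [this]
    exact hPactsum t ht1 ht2 s aM
  have hrMle1 : ∀ t, 1 ≤ t → t ≤ H → ∀ (s : S) (aM : Option A),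
      rM r piH θ t s aM ≤ 1 := by
    intro t ht1 ht2 s aM
    unfold rM
    calc ∑ a : A, r t s a * Pact piH θ t s aM a
        ≤ ∑ a : A, 1 * Pact piH θ t s aM a := by
          refine Finset.sum_le_sum fun a _ => ?_
          exact mul_le_mul_of_nonneg_right (hr t ht1 ht2 s a).2 (hPactnn t ht1 ht2 s aM a)
      _ = 1 := by simp_rw [one_mul]; exact hPactsum t ht1 ht2 s aM
  have hpenle : ∀ t, 1 ≤ t → t ≤ H → ∀ (s : S) (aM : Option A),
      rMpen r piH θ β t s aM ≤ rM r piH θ t s aM := by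
    intro t _ _ s aM
    have : 0 ≤ β * indAdv aM := by
      cases aM <;> simp [indAdv] <;> positivity
    simp only [rMpen]; linarith
  have hpenle1 : ∀ t, 1 ≤ t → t ≤ H → ∀ (s : S) (aM : Option A),
      rMpen r piH θ β t s aM ≤ 1 := fun t ht1 ht2 s aM =>
    (hpenle t ht1 ht2 s aM).trans (hrMle1 t ht1 ht2 s aM)
  -- compare optimal values at stage h+1
  have key : ∀ s' : S, Vstar H (pM p piH θ) (rMpen r piH θ β) (h+1) s'
      ≤ Vstar H (pM p piH θ) (rM r piH θ) (h+1) s' := by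
    intro s'
    refine ciSup_le fun pol => ?_
    have hmono : Vval H (pM p piH θ) (rMpen r piH θ β) pol (h+1) s'
        ≤ Vval H (pM p piH θ) (rM r piH θ) pol (h+1) s' := by
      unfold Vval
      exact Vfuel_mono_reward H (pM p piH θ) (rMpen r piH θ β) (rM r piH θ)
        (fun t ht1 ht2 s aM => hpMnn t ht1 ht2 s aM) hpenle pol
        (H + 1 - (h+1)) (h+1) (by omega) (by omega) s'
    refine hmono.trans ?_
    unfold Vstar
    refine le_ciSup (f := fun pol : ℕ → S → Option A =>
      Vval H (pM p piH θ) (rM r piH θ) pol (h+1) s') ?_ pol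
    refine ⟨((H + 1 - (h+1) : ℕ) : ℝ), ?_⟩
    rintro x ⟨pol', rfl⟩
    exact Vfuel_le_fuel H (pM p piH θ) (rM r piH θ) hpMstoch hrMle1 pol'
      (H + 1 - (h+1)) (h+1) (by omega) (by omega) s'
  -- conclude
  unfold Qstar
  have hrw : rMpen r piH θ β h s (some b) = rM r piH θ h s (some b) - β * 1 := rfl
  have hsum : ∑ s' : S, pM p piH θ h s (some b) s'
        * Vstar H (pM p piH θ) (rMpen r piH θ β) (h+1) s'
      ≤ ∑ s' : S, pM p piH θ h s (some b) s'
        * Vstar H (pM p piH θ) (rM r piH θ) (h+1) s' := by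
    refine Finset.sum_le_sum fun s' _ => ?_
    exact mul_le_mul_of_nonneg_left (key s') (hpMnn h h1 hH2 s (some b) s')
  rw [hrw]
  linarith
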